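/- Let R be a Prüfer domain and P a nonzero prime ideal. If there is a finitely generated ideal I ⊆ P such that every maximal ideal containing I contains P, then there is a prime ideal Q ⊆ P with Q the radical of a finitely generated ideal such that every maximal ideal containing Q contains P. -/

import Mathlib

/-- An ideal is divisorial if `I = (R : (R : I))`, phrased via fractional ideals. -/
def IsDivisorial (R : Type*) [CommRing R] [IsDomain R] (I : Ideal R) : Prop :=
  (1 / (1 / (I : FractionalIdeal (nonZeroDivisors R) (FractionRing R))) :
    FractionalIdeal (nonZeroDivisors R) (FractionRing R))
    = (I : FractionalIdeal (nonZeroDivisors R) (FractionRing R))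

/-- An ideal is invertible if it is a unit as a fractional ideal. -/
def IsInvertibleIdeal (R : Type*) [CommRing R] [IsDomain R] (I : Ideal R) : Prop :=
  IsUnit (I : FractionalIdeal (nonZeroDivisors R) (FractionRing R))

/-- A Prüfer domain: every nonzero finitely generated ideal is invertible. -/
def IsPrufer (R : Type*) [CommRing R] [IsDomain R] : Prop :=
  ∀ I : Ideal R, I ≠ ⊥ → I.FG → IsInvertibleIdeal R I

/-- A prime `P` is sharp if it contains a finitely generated ideal contained
only in the maximal ideals that contain `P`. -/
def IsSharp (R : Type*) [CommRing R] (P : Ideal R) : Prop :=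
  ∃ I : Ideal R, I.FG ∧ I ≤ P ∧ ∀ M : Ideal R, M.IsMaximal → I ≤ M → P ≤ M

open FractionalIdeal in
/-- In a Prüfer domain, divisibility in a localization at a prime is total on images. -/
lemma prufer_dvd_total' {R : Type*} [CommRing R] [IsDomain R] (hR : IsPrufer R)
    (M : Ideal R) [M.IsPrime] (a b : R) :
    algebraMap R (Localization.AtPrime M) a ∣ algebraMap R (Localization.AtPrime M) b ∨
    algebraMap R (Localization.AtPrime M) b ∣ algebraMap R (Localization.AtPrime M) a := by
  by_cases ha : a = 0
  · right; exact ⟨0, by simp [ha]⟩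
  set K := FractionRing R
  set f := algebraMap R K with hf
  have hfinj : Function.Injective f := IsFractionRing.injective R K
  set I : Ideal R := Ideal.span {a, b} with hI
  have haI : a ∈ I := Ideal.subset_span (by simp)
  have hbI : b ∈ I := Ideal.subset_span (by simp)
  have hIbot : I ≠ ⊥ := by
    intro hbot
    exact ha (by simpa [hbot] using haI)
  obtain ⟨u, hu⟩ := hR I hIbot (Submodule.fg_span (Set.toFinite _))
  set J : FractionalIdeal (nonZeroDivisors R) K := ↑u⁻¹ with hJ
  have hIJ : (I : FractionalIdeal (nonZeroDivisors R) K) * J = 1 := by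
    rw [← hu, hJ]; exact_mod_cast u.mul_inv
  -- decompose I as sum of two span singletons
  have hdecomp : (I : FractionalIdeal (nonZeroDivisors R) K)
      = spanSingleton (nonZeroDivisors R) (f a) + spanSingleton (nonZeroDivisors R) (f b) := by
    rw [hI, show ({a, b} : Set R) = insert a {b} from rfl, Ideal.span_insert, coeIdeal_sup,
      coeIdeal_span_singleton, coeIdeal_span_singleton]
  have h1 : (1 : K) ∈ (I : FractionalIdeal (nonZeroDivisors R) K) * J := by
    rw [hIJ]; exact one_mem_one _
  rw [hdecomp, add_mul, mem_add] at h1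
  obtain ⟨x, hx, y, hy, hxy⟩ := h1
  rw [mem_singleton_mul] at hx hy
  obtain ⟨j, hj, rfl⟩ := hx
  obtain ⟨j', hj', rfl⟩ := hy
  -- the four products lie in R
  have hmem : ∀ c : R, c ∈ I → ∀ z : K, z ∈ J → ∃ r : R, f r = f c * z := by
    intro c hc z hz
    have : f c * z ∈ (I : FractionalIdeal (nonZeroDivisors R) K) * J :=
      mul_mem_mul (mem_coeIdeal_of_mem _ hc) hz
    rw [hIJ] at this
    exact (mem_one_iff _).mp this
  obtain ⟨r11, hr11⟩ := hmem a haI j hj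
  obtain ⟨r21, hr21⟩ := hmem b hbI j hj
  obtain ⟨r22, hr22⟩ := hmem b hbI j' hj'
  obtain ⟨r12, hr12⟩ := hmem a haI j' hj'
  have hsum : r11 + r22 = 1 := by
    apply hfinj
    rw [_root_.map_add, _root_.map_one, hr11, hr22, hxy]
  have hid1 : b * r11 = a * r21 := by
    apply hfinj
    rw [_root_.map_mul, _root_.map_mul, hr11, hr21]; ring
  have hid2 : a * r22 = b * r12 := by
    apply hfinj
    rw [_root_.map_mul, _root_.map_mul, hr22, hr12]; ring
  set g := algebraMap R (Localization.AtPrime M) with hg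
  have hcase : r11 ∉ M ∨ r22 ∉ M := by
    by_contra hc
    push_neg at hc
    exact M.primeCompl.one_mem (hsum ▸ Ideal.add_mem M hc.1 hc.2 : (1:R) ∈ M)
  rcases hcase with hcase | hcase
  · -- g r11 is a unit, b = a * r21 / r11
    have hu11 : IsUnit (g r11) := IsLocalization.AtPrime.isUnit_to_map_iff _ M r11 |>.mpr hcase
    left
    refine ⟨g r21 * ↑hu11.unit⁻¹, hu11.mul_right_cancel ?_⟩
    calc g b * g r11 = g (a * r21) := by rw [← _root_.map_mul, hid1]
      _ = g a * ((g r21 * ↑hu11.unit⁻¹) * g r11) := by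
          rw [mul_assoc, hu11.val_inv_mul, mul_one, _root_.map_mul]
      _ = g a * (g r21 * ↑hu11.unit⁻¹) * g r11 := by ring
  · have hu22 : IsUnit (g r22) := IsLocalization.AtPrime.isUnit_to_map_iff _ M r22 |>.mpr hcase
    right
    refine ⟨g r12 * ↑hu22.unit⁻¹, hu22.mul_right_cancel ?_⟩
    calc g a * g r22 = g (b * r12) := by rw [← _root_.map_mul, hid2]
      _ = g b * ((g r12 * ↑hu22.unit⁻¹) * g r22) := by
          rw [mul_assoc, hu22.val_inv_mul, mul_one, _root_.map_mul]
      _ = g b * (g r12 * ↑hu22.unit⁻¹) * g r22 := by ring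

/-- Ideals in the localization of a Prüfer domain at a prime are totally ordered. -/
lemma prufer_ideal_total' {R : Type*} [CommRing R] [IsDomain R] (hR : IsPrufer R)
    (M : Ideal R) [M.IsPrime] (p q : Ideal (Localization.AtPrime M)) : p ≤ q ∨ q ≤ p := by
  have hpre : PreValuationRing (Localization.AtPrime M) := by
    rw [PreValuationRing.iff_dvd_total]
    constructor
    intro x y
    obtain ⟨⟨a, s⟩, rfl⟩ := IsLocalization.mk'_surjective M.primeCompl x
    obtain ⟨⟨b, t⟩, rfl⟩ := IsLocalization.mk'_surjective M.primeCompl y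
    have hax : Associated (IsLocalization.mk' (Localization.AtPrime M) a s)
        (algebraMap R (Localization.AtPrime M) a) :=
      ⟨(IsLocalization.map_units (Localization.AtPrime M) s).unit, IsLocalization.mk'_spec _ a s⟩
    have hbx : Associated (IsLocalization.mk' (Localization.AtPrime M) b t)
        (algebraMap R (Localization.AtPrime M) b) :=
      ⟨(IsLocalization.map_units (Localization.AtPrime M) t).unit, IsLocalization.mk'_spec _ b t⟩
    rcases prufer_dvd_total' hR M a b with hd | hd
    · exact Or.inl ((hax.dvd_iff_dvd_left.mpr) ((hbx.dvd_iff_dvd_right.mpr) hd))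
    · exact Or.inr ((hbx.dvd_iff_dvd_left.mpr) ((hax.dvd_iff_dvd_right.mpr) hd))
  exact (PreValuationRing.iff_ideal_total.mp hpre).total p q

theorem exists_prime_radical_fg_of_sharp_aux (R : Type*) [CommRing R] [IsDomain R]
    (hR : IsPrufer R) (P : Ideal R) (hP : P.IsPrime) (h0 : P ≠ ⊥)
    (h : ∃ I : Ideal R, I.FG ∧ I ≤ P ∧
      ∀ M : Ideal R, M.IsMaximal → I ≤ M → P ≤ M) :
    ∃ Q : Ideal R, Q.IsPrime ∧ Q ≤ P ∧ (∃ J : Ideal R, J.FG ∧ J.radical = Q) ∧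
      ∀ M : Ideal R, M.IsMaximal → Q ≤ M → P ≤ M := by
  obtain ⟨I, hIfg, hIP, hImax⟩ := h
  obtain ⟨Q₀, hQ₀min, hQ₀P⟩ := Ideal.exists_minimalPrimes_le hIP
  have hQ₀prime : Q₀.IsPrime := hQ₀min.1.1
  have huniq : ∀ T ∈ I.minimalPrimes, T = Q₀ := by
    intro T hT
    have hTprime : T.IsPrime := hT.1.1
    obtain ⟨M, hM, hTM⟩ := Ideal.exists_le_maximal T hTprime.ne_top
    have hPM : P ≤ M := hImax M hM (hT.1.2.trans hTM)
    have hQ₀M : Q₀ ≤ M := hQ₀P.trans hPM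
    haveI := hM.isPrime
    set g := algebraMap R (Localization.AtPrime M)
    have hdisj : ∀ {p : Ideal R}, p ≤ M → Disjoint (M.primeCompl : Set R) (p : Set R) := by
      intro p hpM
      rw [Set.disjoint_iff]
      rintro x ⟨hx1, hx2⟩
      exact hx1 (hpM hx2)
    have hcT : (T.map g).comap g = T :=
      IsLocalization.comap_map_of_isPrime_disjoint M.primeCompl _ hTprime (hdisj hTM)
    have hcQ : (Q₀.map g).comap g = Q₀ :=
      IsLocalization.comap_map_of_isPrime_disjoint M.primeCompl _ hQ₀prime (hdisj hQ₀M)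
    rcases prufer_ideal_total' hR M (T.map g) (Q₀.map g) with h1 | h1
    · have hTQ : T ≤ Q₀ := by rw [← hcT, ← hcQ]; exact Ideal.comap_mono h1
      exact le_antisymm hTQ (hQ₀min.2 ⟨hTprime, hT.1.2⟩ hTQ)
    · have hQT : Q₀ ≤ T := by rw [← hcT, ← hcQ]; exact Ideal.comap_mono h1
      exact le_antisymm (hT.2 ⟨hQ₀prime, hQ₀min.1.2⟩ hQT) hQT
  have hrad : I.radical = Q₀ := by
    rw [← Ideal.sInf_minimalPrimes,
      Set.eq_singleton_iff_unique_mem.mpr ⟨hQ₀min, huniq⟩, sInf_singleton]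
  exact ⟨I.radical, hrad ▸ hQ₀prime, hrad ▸ hQ₀P, ⟨I, hIfg, rfl⟩,
    fun M hM hQM => hImax M hM (Ideal.le_radical.trans hQM)⟩

/-- In a Prüfer domain, a sharp prime `P` contains a prime `Q` that is the radical
of a finitely generated ideal, with every maximal ideal containing `Q` containing `P`. -/
theorem exists_prime_radical_fg_of_sharp (R : Type*) [CommRing R] [IsDomain R]
    (hR : IsPrufer R) (P : Ideal R) (hP : P.IsPrime) (h0 : P ≠ ⊥)
    (h : ∃ I : Ideal R, I.FG ∧ I ≤ P ∧
      ∀ M : Ideal R, M.IsMaximal → I ≤ M → P ≤ M) :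
    ∃ Q : Ideal R, Q.IsPrime ∧ Q ≤ P ∧ (∃ J : Ideal R, J.FG ∧ J.radical = Q) ∧
      ∀ M : Ideal R, M.IsMaximal → Q ≤ M → P ≤ M := by
  exact exists_prime_radical_fg_of_sharp_aux R hR P hP h0 h
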